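/- Define a_n := t_{n−1}, aᵢ := uᵢ·sᵢ·uᵢ⁻¹ for 2 ≤ i ≤ n−1, and a₁ := u₁·s₁. Then a_n·a_{n−1}·a_{n−2} ⋯ a₂·a₁ = g_{n−1}·g_{n−2}⁻¹·g_{n−3}·g_{n−4}⁻¹ ⋯ g₃·g₂⁻¹·g₁. In particular, a_n·a_{n−1} ⋯ a₁ = 1 if and only if g_{n−1}·g_{n−2}⁻¹·g_{n−3} ⋯ g₂⁻¹·g₁ = 1. -/
import Mathlib

private lemma peel_rev {G : Type*} [Group G] (f : ℕ → G) (s m : ℕ) :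
    ((List.range' s (m+1)).reverse.map f).prod
      = ((List.range' (s+1) m).reverse.map f).prod * f s := by
  rw [List.range'_succ]
  simp

private lemma rev_prod_inv {G : Type*} [Group G] (f : ℕ → G) :
    ∀ L : List ℕ, (∀ x ∈ L, f x * f x = 1) →
      ((L.reverse).map f).prod = ((L.map f).prod)⁻¹ := by
  intro L
  induction L with
  | nil => simp
  | cons x L ih =>
    intro h
    have hx : (f x)⁻¹ = f x := inv_eq_of_mul_eq_one_right (h x (by simp))
    have hL := ih (fun y hy => h y (by simp [hy]))
    simp only [List.reverse_cons, List.map_append, List.prod_append, List.map_cons,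
      List.prod_cons, List.map_nil, List.prod_nil, mul_one, mul_inv_rev, hx, hL]

/-- Let `n ≥ 6` be even, `G` a group, `t 1, …, t (n-1)` and
`s 1, …, s (n-1)` involutions with `t 1 = t (n-1)`, let `u` be as in the paper
(`u n = u (n-1) = u (n-2) = 1`; for `1 ≤ i ≤ n-3`, `u i = t (n-2) ⋯ t (i+1)` for even `i`
and `u i = t (n-2) ⋯ t (i+1) * t i` for odd `i`), and set `g i = t i * s i`.
Define `a n = t (n-1)`, `a i = u i * s i * (u i)⁻¹` for `2 ≤ i ≤ n-1`, `a 1 = u 1 * s 1`.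
Then `a n * a (n-1) * ⋯ * a 1 = g (n-1) * (g (n-2))⁻¹ * g (n-3) * ⋯ * (g 2)⁻¹ * g 1`;
in particular the left product is `1` iff the right product is `1`. -/
theorem a_product_eq_alternating_g_product {G : Type*} [Group G] (n : ℕ) (hn : 6 ≤ n)
    (hEven : Even n) (t s u g a : ℕ → G)
    (ht : ∀ i, 1 ≤ i → i ≤ n - 1 → t i * t i = 1)
    (ht1 : t 1 = t (n - 1))
    (hs : ∀ i, 1 ≤ i → i ≤ n - 1 → s i * s i = 1)
    (hun : u n = 1) (hun1 : u (n - 1) = 1) (hun2 : u (n - 2) = 1)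
    (hui : ∀ i, 1 ≤ i → i ≤ n - 3 →
      u i = if i % 2 = 0 then ((List.range' (i + 1) (n - 2 - i)).reverse.map t).prod
        else ((List.range' i (n - 1 - i)).reverse.map t).prod)
    (hg : ∀ i, 1 ≤ i → i ≤ n - 1 → g i = t i * s i)
    (han : a n = t (n - 1))
    (hai : ∀ i, 2 ≤ i → i ≤ n - 1 → a i = u i * s i * (u i)⁻¹)
    (ha1 : a 1 = u 1 * s 1) :
    ((List.range' 1 n).reverse.map a).prod =
      ((List.range' 1 (n - 1)).reverse.map
        (fun i => if i % 2 = 0 then (g i)⁻¹ else g i)).prod ∧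
    (((List.range' 1 n).reverse.map a).prod = 1 ↔
      ((List.range' 1 (n - 1)).reverse.map
        (fun i => if i % 2 = 0 then (g i)⁻¹ else g i)).prod = 1) := by
  obtain ⟨m, hm⟩ := hEven
  set f : ℕ → G := fun i => if i % 2 = 0 then (g i)⁻¹ else g i with hf
  have tinv : ∀ i, 1 ≤ i → i ≤ n - 1 → (t i)⁻¹ = t i := fun i h1 h2 =>
    inv_eq_of_mul_eq_one_right (ht i h1 h2)
  have sinv : ∀ i, 1 ≤ i → i ≤ n - 1 → (s i)⁻¹ = s i := fun i h1 h2 =>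
    inv_eq_of_mul_eq_one_right (hs i h1 h2)
  have hfval : ∀ j, f j = if j % 2 = 0 then (g j)⁻¹ else g j := fun j => rfl
  -- key downward induction
  have key : ∀ k, k ≤ n - 3 →
      ((List.range' (n-1-k) (k+2)).reverse.map a).prod =
        ((List.range' (n-1-k) (k+1)).reverse.map f).prod *
        ((List.range' (n-1-k) k).map t).prod := by
    intro k
    induction k with
    | zero =>
      intro _
      have h2 : n - 1 - 0 = n - 1 := by omega
      rw [h2]
      have hnn : n - 1 + 1 = n := by omega
      simp only [List.range', hnn, List.reverse_cons, List.reverse_nil, List.map_nil,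
        List.nil_append, List.map_append, List.map_cons, List.prod_append, List.prod_cons,
        List.prod_nil, List.cons_append]
      rw [han, hai (n-1) (by omega) (le_refl _), hun1, hfval, 
        if_neg (show ¬ ((n-1) % 2 = 0) by omega), hg (n-1) (by omega) (le_refl _)]
      group
    | succ k ih =>
      intro hk
      have hi : n - 1 - (k+1) = n - 2 - k := by omega
      set i := n - 2 - k with hidef
      have hi1 : n - 1 - k = i + 1 := by omega
      have hI2 : 2 ≤ i := by omega
      have hIn : i ≤ n - 2 := by omega
      rw [hi]
      -- peel a i, f i, t i
      have e1 : ((List.range' i (k+1+2)).reverse.map a).prod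
          = ((List.range' (i+1) (k+2)).reverse.map a).prod * a i := peel_rev a i (k+2)
      have e2 : ((List.range' i (k+1+1)).reverse.map f).prod
          = ((List.range' (i+1) (k+1)).reverse.map f).prod * f i := peel_rev f i (k+1)
      have e3 : ((List.range' i (k+1)).map t).prod
          = t i * ((List.range' (i+1) k).map t).prod := by
        rw [List.range'_succ]; simp
      rw [e1, e2, e3]
      rw [hi1] at ih
      rw [ih (by omega)]
      set W : G := ((List.range' (i+1) k).map t).prod with hW
      set Q : G := ((List.range' (i+1) (k+1)).reverse.map f).prod with hQ
      -- suffices : W * a i = f i * (t i * W)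
      have suff : W * a i = f i * (t i * W) → Q * W * a i = Q * f i * (t i * W) := by
        intro h
        rw [mul_assoc, h, mul_assoc]
      apply suff
      have hWinv : ((List.range' (i+1) k).reverse.map t).prod = W⁻¹ := by
        apply rev_prod_inv
        intro x hx
        rw [List.mem_range'_1] at hx
        exact ht x (by omega) (by omega)
      have hai' : a i = u i * s i * (u i)⁻¹ := hai i hI2 (by omega)
      rcases Nat.eq_or_lt_of_le hIn with hieq | hilt
      · -- i = n - 2, k = 0
        have hk0 : k = 0 := by omega
        have hWone : W = 1 := by rw [hW, hk0]; simp [List.range']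
        rw [hai', hieq, hun2, hWone, hfval,
          if_pos (show (n-2) % 2 = 0 by omega), hg (n-2) (by omega) (by omega), mul_inv_rev,
          sinv (n-2) (by omega) (by omega), tinv (n-2) (by omega) (by omega)]
        have hti := ht (n-2) (by omega) (by omega)
        simp only [one_mul, mul_one, inv_one]
        rw [mul_assoc, hti, mul_one]
      · -- i ≤ n - 3
        have hIn3 : i ≤ n - 3 := by omega
        have hu := hui i (by omega) hIn3
        rcases Nat.even_or_odd i with hie | hio
        · -- i even
          have hie' : i % 2 = 0 := Nat.even_iff.mp hie
          rw [if_pos hie'] at hu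
          have hlen : n - 2 - i = k := by omega
          rw [hlen, hWinv] at hu
          rw [hai', hu, hfval, if_pos hie', hg i (by omega) (by omega), mul_inv_rev,
            sinv i (by omega) (by omega), tinv i (by omega) (by omega)]
          have hti := ht i (by omega) (by omega)
          calc W * (W⁻¹ * s i * (W⁻¹)⁻¹) = s i * W := by group
          _ = s i * t i * (t i * W) := by rw [mul_assoc, ← mul_assoc (t i), hti, one_mul]
        · -- i odd
          have hio' : ¬ (i % 2 = 0) := by
            have := Nat.odd_iff.mp hio; omega
          rw [if_neg hio'] at hu
          have hlen : n - 1 - i = k + 1 := by omega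
          rw [hlen, List.range'_succ] at hu
          have hu2 : u i = ((i :: List.range' (i+1) k).map t).prod⁻¹ := by
            rw [hu]
            apply rev_prod_inv
            intro x hx
            simp only [List.mem_cons, List.mem_range'_1] at hx
            rcases hx with h | h
            · subst h; exact ht i (by omega) (by omega)
            · exact ht x (by omega) (by omega)
          rw [List.map_cons, List.prod_cons, ← hW] at hu2
          rw [hai', hu2, hfval, if_neg hio', hg i (by omega) (by omega)]
          have htiinv := tinv i (by omega) (by omega)
          calc W * ((t i * W)⁻¹ * s i * ((t i * W)⁻¹)⁻¹)
              = (t i)⁻¹ * s i * (t i * W) := by group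
          _ = t i * s i * (t i * W) := by rw [htiinv]
  -- conclude
  have hkey := key (n - 3) (le_refl _)
  have h2 : n - 1 - (n - 3) = 2 := by omega
  have h3 : n - 3 + 2 = n - 1 := by omega
  have h4 : n - 3 + 1 = n - 2 := by omega
  rw [h2, h3, h4] at hkey
  have main : ((List.range' 1 n).reverse.map a).prod = ((List.range' 1 (n-1)).reverse.map f).prod := by
    have e1 : ((List.range' 1 n).reverse.map a).prod
        = ((List.range' 2 (n-1)).reverse.map a).prod * a 1 := by
      have : n = (n - 1) + 1 := by omega
      rw [this]; exact peel_rev a 1 (n-1)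
    have e2 : ((List.range' 1 (n-1)).reverse.map f).prod
        = ((List.range' 2 (n-2)).reverse.map f).prod * f 1 := by
      have : n - 1 = (n - 2) + 1 := by omega
      rw [this]; exact peel_rev f 1 (n-2)
    rw [e1, e2, hkey]
    set W : G := ((List.range' 2 (n-3)).map t).prod with hW
    set Q : G := ((List.range' 2 (n-2)).reverse.map f).prod with hQ
    -- a 1 = u 1 * s 1 with u 1 = (t 1 * W)⁻¹
    have hu := hui 1 (le_refl _) (by omega)
    rw [if_neg (by omega)] at hu
    have hlen : n - 1 - 1 = (n - 3) + 1 := by omega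
    rw [hlen, List.range'_succ] at hu
    rw [show (1:ℕ)+1 = 2 from rfl] at hu
    have hu2 : u 1 = ((1 :: List.range' 2 (n-3)).map t).prod⁻¹ := by
      rw [hu]
      apply rev_prod_inv
      intro x hx
      simp only [List.mem_cons, List.mem_range'_1] at hx
      rcases hx with h | h
      · subst h; exact ht 1 (by omega) (by omega)
      · exact ht x (by omega) (by omega)
    rw [List.map_cons, List.prod_cons, ← hW] at hu2
    have hf1 : f 1 = g 1 := by rw [hfval]; norm_num
    rw [ha1, hu2, hf1, hg 1 (by omega) (by omega)]
    have ht1inv := tinv 1 (by omega) (by omega)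
    calc Q * W * ((t 1 * W)⁻¹ * s 1)
        = Q * ((t 1)⁻¹ * s 1) := by group
    _ = Q * (t 1 * s 1) := by rw [ht1inv]
  exact ⟨main, by rw [main]⟩
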